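/- Any injective-message-passing temporal graph network (IMP-TGN) representation can be exactly simulated by an RTRGN: for every choice of aggregation function AGG and combine function COMBINE there exist choices of the RTRGN functions TR, RMSG, and UPDATE such that the RTRGN produces identical node embeddings to the IMP-TGN on every temporal graph input; hence RTRGN is at least as expressive as IMP-TGN in temporal graph isomorphism testing. -/
import Mathlib


/-- A temporal graph on node type `V`: a finite set of timed edge events. -/
structure TemporalGraph (V : Type) where
  events : Finset (V × V × ℕ)

/-- The multiset of (neighbor, event time) pairs of `u` over events up to time `t`. -/
def nbrs {V : Type} [DecidableEq V] (G : TemporalGraph V) (t : ℕ) (u : V) :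
    Multiset (V × ℕ) :=
  (G.events.filter (fun e => e.1 = u ∧ e.2.2 ≤ t)).val.map (fun e => (e.2.1, e.2.2))

/-- The multiset of (neighbor, event time) pairs over events strictly before `t`
(the set `E(t^-)`). -/
def nbrsBefore {V : Type} [DecidableEq V] (G : TemporalGraph V) (t : ℕ) (u : V) :
    Multiset (V × ℕ) :=
  (G.events.filter (fun e => e.1 = u ∧ e.2.2 < t)).val.map (fun e => (e.2.1, e.2.2))

/-- The multiset of (neighbor, event time) pairs over events occurring exactly at `t`. -/
def nbrsAt {V : Type} [DecidableEq V] (G : TemporalGraph V) (t : ℕ) (u : V) :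
    Multiset (V × ℕ) :=
  (G.events.filter (fun e => e.1 = u ∧ e.2.2 = t)).val.map (fun e => (e.2.1, e.2.2))

/-- IMP-TGN embedding:
`h^{k+1}_u(t) = COMBINE^{k+1}(h^k_u(t), AGG^{k+1}({(h^k_v(t), Φ(e_{uv,t'})) : e ∈ E(t)}))`
built on a base embedding `h0`. -/
def impEmb {V E F : Type} [DecidableEq V] (G : TemporalGraph V) (Φ : V × V × ℕ → F)
    (h0 : V → ℕ → E) (AGG : ℕ → Multiset (E × F) → E) (COMBINE : ℕ → E → E → E) :
    ℕ → V → ℕ → E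
  | 0, u, t => h0 u t
  | k + 1, u, t =>
      COMBINE (k + 1) (impEmb G Φ h0 AGG COMBINE k u t)
        (AGG (k + 1) ((nbrs G t u).map
          (fun p => (impEmb G Φ h0 AGG COMBINE k p.1 t, Φ (u, p.1, p.2)))))

/-- The RTRGN layers: `rtrPair … k = (r^k, h^k)` where
`r^k_u(t) = TR^k({(r^{k-1}_v(t), h^{k-1}_v(t), h^{k-1}_v(t^-), Φ(e_{uv,t'})) : e ∈ E(t^-)})`,
`m^k_u(t) = RMSG^k(h^{k-1}_u(t), {(h^{k-1}_v(t), Φ(e_{uv,t})) : e at time t}, r^k_u(t))`, and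
`h^k_u(t) = UPDATE^k(h^k_u(t^-), m^k_u(t))` with initial hidden state `hinit`. -/
def rtrPair {V E F R : Type} [DecidableEq V] (G : TemporalGraph V) (Φ : V × V × ℕ → F)
    (TR : ℕ → Multiset (R × E × E × F) → R)
    (RMSG : ℕ → E → Multiset (E × F) → R → E)
    (UPDATE : ℕ → E → E → E)
    (hinit : ℕ → V → E) (r0 : R) (h0 : V → ℕ → E) :
    ℕ → ((V → ℕ → R) × (V → ℕ → E))
  | 0 => (fun _ _ => r0, h0)
  | k + 1 =>
      let prev := rtrPair G Φ TR RMSG UPDATE hinit r0 h0 k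
      let r : V → ℕ → R := fun u t =>
        TR (k + 1) ((nbrsBefore G t u).map (fun p =>
          (prev.1 p.1 t, prev.2 p.1 t, prev.2 p.1 (t - 1), Φ (u, p.1, p.2))))
      let m : V → ℕ → E := fun u t =>
        RMSG (k + 1) (prev.2 u t)
          ((nbrsAt G t u).map (fun p => (prev.2 p.1 t, Φ (u, p.1, p.2)))) (r u t)
      let h : V → ℕ → E := fun u t =>
        Nat.rec (motive := fun _ => E)
          (UPDATE (k + 1) (hinit (k + 1) u) (m u 0))
          (fun t' ih => UPDATE (k + 1) ih (m u (t' + 1))) t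
      (r, h)


lemma filter_le_split {V : Type} [DecidableEq V] (u : V) (t : ℕ)
    (s : Multiset (V × V × ℕ)) :
    s.filter (fun e => e.1 = u ∧ e.2.2 ≤ t)
      = s.filter (fun e => e.1 = u ∧ e.2.2 < t)
        + s.filter (fun e => e.1 = u ∧ e.2.2 = t) := by
  rw [Multiset.filter_add_filter]
  have h1 : s.filter (fun e => (e.1 = u ∧ e.2.2 < t) ∨ (e.1 = u ∧ e.2.2 = t))
      = s.filter (fun e => e.1 = u ∧ e.2.2 ≤ t) := by
    apply Multiset.filter_congr
    intro e _
    constructor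
    · rintro (⟨h, h'⟩ | ⟨h, h'⟩) <;> exact ⟨h, by omega⟩
    · rintro ⟨h, h'⟩
      rcases Nat.lt_or_eq_of_le h' with h'' | h''
      · exact Or.inl ⟨h, h''⟩
      · exact Or.inr ⟨h, h''⟩
  have h2 : s.filter (fun e => (e.1 = u ∧ e.2.2 < t) ∧ (e.1 = u ∧ e.2.2 = t)) = 0 := by
    rw [Multiset.filter_eq_nil]
    rintro e _ ⟨⟨_, h⟩, ⟨_, h'⟩⟩
    omega
  rw [h1, h2, add_zero]

lemma nbrs_split {V : Type} [DecidableEq V] (G : TemporalGraph V) (t : ℕ) (u : V) :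
    nbrs G t u = nbrsBefore G t u + nbrsAt G t u := by
  simp [nbrs, nbrsBefore, nbrsAt, Finset.filter_val, filter_le_split, Multiset.map_add]

lemma rtr_eq_imp {V E F : Type} [DecidableEq V]
    (AGG : ℕ → Multiset (E × F) → E) (COMBINE : ℕ → E → E → E)
    (hinit : ℕ → V → E)
    (G : TemporalGraph V) (Φ : V × V × ℕ → F) (h0 : V → ℕ → E)
    (k : ℕ) (u : V) (t : ℕ) :
    (rtrPair G Φ (fun _ s => s.map (fun q => (q.2.1, q.2.2.2)))
      (fun k h s r => COMBINE k h (AGG k (r + s)))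
      (fun _ _ m => m) hinit (0 : Multiset (E × F)) h0 k).2 u t
      = impEmb G Φ h0 AGG COMBINE k u t := by
  induction k generalizing u t with
  | zero => rfl
  | succ k ih =>
      have hstep :
          (rtrPair G Φ (fun _ s => s.map (fun q => (q.2.1, q.2.2.2)))
            (fun k h s r => COMBINE k h (AGG k (r + s)))
            (fun _ _ m => m) hinit (0 : Multiset (E × F)) h0 (k+1)).2 u t
            = COMBINE (k+1)
                ((rtrPair G Φ (fun _ s => s.map (fun q => (q.2.1, q.2.2.2)))
                  (fun k h s r => COMBINE k h (AGG k (r + s)))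
                  (fun _ _ m => m) hinit (0 : Multiset (E × F)) h0 k).2 u t)
                (AGG (k+1)
                  (((nbrsBefore G t u).map (fun p =>
                      ((rtrPair G Φ (fun _ s => s.map (fun q => (q.2.1, q.2.2.2)))
                        (fun k h s r => COMBINE k h (AGG k (r + s)))
                        (fun _ _ m => m) hinit (0 : Multiset (E × F)) h0 k).2 p.1 t,
                       Φ (u, p.1, p.2))))
                    + ((nbrsAt G t u).map (fun p =>
                      ((rtrPair G Φ (fun _ s => s.map (fun q => (q.2.1, q.2.2.2)))
                        (fun k h s r => COMBINE k h (AGG k (r + s)))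
                        (fun _ _ m => m) hinit (0 : Multiset (E × F)) h0 k).2 p.1 t,
                       Φ (u, p.1, p.2)))))) := by
        cases t with
        | zero => simp [rtrPair, Multiset.map_map]
        | succ t' => simp [rtrPair, Multiset.map_map]
      rw [hstep]
      simp only [impEmb, nbrs_split, Multiset.map_add]
      congr 1
      · exact ih u t
      · congr 1
        congr 1
        · exact Multiset.map_congr rfl (fun p _ => by rw [ih])
        · exact Multiset.map_congr rfl (fun p _ => by rw [ih])

/-- Any IMP-TGN representation can be exactly simulated by an RTRGN: for every `AGG`
and `COMBINE` there exist `TR`, `RMSG`, `UPDATE` (and initial values) such that the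
RTRGN produces identical node embeddings on every temporal graph input; hence RTRGN is
at least as expressive as IMP-TGN in temporal graph isomorphism testing. -/
theorem stmt6 {V E F : Type} [DecidableEq V]
    (AGG : ℕ → Multiset (E × F) → E) (COMBINE : ℕ → E → E → E) :
    ∃ (R : Type) (r0 : R) (TR : ℕ → Multiset (R × E × E × F) → R)
      (RMSG : ℕ → E → Multiset (E × F) → R → E)
      (UPDATE : ℕ → E → E → E) (hinit : ℕ → V → E),
      (∀ (G : TemporalGraph V) (Φ : V × V × ℕ → F) (h0 : V → ℕ → E)
          (k : ℕ) (u : V) (t : ℕ),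
        (rtrPair G Φ TR RMSG UPDATE hinit r0 h0 k).2 u t
          = impEmb G Φ h0 AGG COMBINE k u t) ∧
      (∀ (G₁ G₂ : TemporalGraph V) (Φ : V × V × ℕ → F) (h0₁ h0₂ : V → ℕ → E)
          (K t : ℕ),
        (∃ π : Equiv.Perm V, ∀ u : V, ∀ t' ≤ t,
          (rtrPair G₁ Φ TR RMSG UPDATE hinit r0 h0₁ K).2 u t'
            = (rtrPair G₂ Φ TR RMSG UPDATE hinit r0 h0₂ K).2 (π u) t') →
        (∃ π : Equiv.Perm V, ∀ u : V, ∀ t' ≤ t,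
          impEmb G₁ Φ h0₁ AGG COMBINE K u t'
            = impEmb G₂ Φ h0₂ AGG COMBINE K (π u) t')) := by
  
  refine ⟨Multiset (E × F), (0 : Multiset (E × F)),
    fun _ s => s.map (fun q => (q.2.1, q.2.2.2)),
    fun k h s r => COMBINE k h (AGG k (r + s)),
    fun _ _ m => m,
    fun _ _ => AGG 0 0,
    fun G Φ h0 k u t => rtr_eq_imp AGG COMBINE _ G Φ h0 k u t, ?_⟩
  rintro G₁ G₂ Φ h0₁ h0₂ K t ⟨π, hπ⟩
  exact ⟨π, fun u t' ht' => by
    rw [← rtr_eq_imp AGG COMBINE (fun _ _ => AGG 0 0) G₁ Φ h0₁ K u t',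
      ← rtr_eq_imp AGG COMBINE (fun _ _ => AGG 0 0) G₂ Φ h0₂ K (π u) t']
    exact hπ u t' ht'⟩
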